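/- arXiv:1103.3296 — 3 statements merged into one kernel-verified Lean document; each statement's English description precedes it below -/
import Mathlib

section
/- Let g ∈ F_q[x] be square-free with g(L_i) ≠ 0 for all i, let e ∈ F_p^n, and let s_e(x) = Σ_i e_i/(x - L_i) mod g(x) be the Goppa syndrome. Fix a nonzero φ ∈ F_p and define σ_φ(x) = Π_i (x - L_i)^{n_i} where n_i ∈ {0,...,p-1} is the canonical lift of e_i/φ ∈ F_p. Then φ·σ_φ'(x) ≡ σ_φ(x)·s_e(x) (mod g(x)). -/
open Polynomial

private lemma derivFinsetProdAux {R ι : Type*} [CommRing R] [DecidableEq ι]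
    (s : Finset ι) (f : ι → R[X]) :
    derivative (∏ i ∈ s, f i) = ∑ i ∈ s, (∏ j ∈ s.erase i, f j) * derivative (f i) := by
  classical
  induction s using Finset.induction_on with
  | empty => simp
  | insert _ _ hx ih =>
    rename_i a t
    rw [Finset.prod_insert hx, derivative_mul, ih, Finset.sum_insert hx,
      Finset.erase_insert hx, Finset.mul_sum]
    congr 1
    · exact mul_comm _ _
    · refine Finset.sum_congr rfl fun i hi => ?_
      rw [Finset.erase_insert_of_ne (by rintro rfl; exact hx hi),
        Finset.prod_insert (fun h => hx (Finset.mem_of_mem_erase h))]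
      ring

/-- The `φ`-th key equation for square-free Goppa codes over `F_p`: with
`σ_φ(x) = ∏ᵢ (x - Lᵢ)^{lift(eᵢ/φ)}` and `s_e` the Goppa syndrome (characterized by the
cleared-denominator congruence `hs`), one has `φ·σ_φ' ≡ σ_φ·s_e (mod g)`. -/
theorem stmt4 (p : ℕ) [Fact p.Prime] (F : Type*) [Field F] [Fintype F] [CharP F p]
    (n : ℕ) (L : Fin n → F) (hL : Function.Injective L)
    (g : F[X]) (hg : Squarefree g) (hroot : ∀ i, g.eval (L i) ≠ 0)
    (e : Fin n → ZMod p) (φ : ZMod p) (hφ : φ ≠ 0)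
    (s : F[X]) (hsdeg : s.degree < g.degree)
    (hs : g ∣ (∏ i, (X - C (L i))) * s
        - ∑ i, C ((ZMod.castHom (dvd_refl p) F) (e i))
            * ∏ j ∈ Finset.univ.erase i, (X - C (L j))) :
    g ∣ C ((ZMod.castHom (dvd_refl p) F) φ)
          * derivative (∏ i, (X - C (L i)) ^ (e i / φ).val)
        - (∏ i, (X - C (L i)) ^ (e i / φ).val) * s := by
  classical
  -- coprimality of g with the linear product
  have hcop : IsCoprime g (∏ i, (X - C (L i))) := by
    apply IsCoprime.prod_right
    intro i _
    refine ((irreducible_X_sub_C (L i)).coprime_iff_not_dvd.2 ?_).symm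
    rw [dvd_iff_isRoot]
    exact hroot i
  -- helper for powers
  have hx : ∀ (x : F[X]) (v : ℕ), C (v : F) * (x * x ^ (v - 1)) = C (v : F) * x ^ v := by
    intro x v
    cases v with
    | zero => simp
    | succ k => rw [Nat.succ_sub_one, ← pow_succ']
  -- key identity
  have key : (∏ i, (X - C (L i))) * derivative (∏ i, (X - C (L i)) ^ (e i / φ).val)
      = ∑ i, C (((e i / φ).val : F)) * (∏ k, (X - C (L k)) ^ (e k / φ).val)
          * ∏ j ∈ Finset.univ.erase i, (X - C (L j)) := by
    rw [derivFinsetProdAux, Finset.mul_sum]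
    refine Finset.sum_congr rfl fun i _ => ?_
    rw [derivative_pow, derivative_sub, derivative_X, derivative_C, sub_zero, mul_one,
      ← Finset.mul_prod_erase _ (fun k => X - C (L k)) (Finset.mem_univ i),
      ← Finset.mul_prod_erase _ (fun k => (X - C (L k)) ^ (e k / φ).val) (Finset.mem_univ i)]
    linear_combination ((∏ j ∈ Finset.univ.erase i, (X - C (L j)) ^ (e j / φ).val)
      * (∏ j ∈ Finset.univ.erase i, (X - C (L j)))) * hx (X - C (L i)) ((e i / φ).val)
  -- cast identity
  have hcast : ∀ i, C ((ZMod.castHom (dvd_refl p) F) φ) * C (((e i / φ).val : F))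
      = C ((ZMod.castHom (dvd_refl p) F) (e i)) := by
    intro i
    rw [← C_mul]
    congr 1
    have h2 : (((e i / φ).val : ℕ) : F) = (ZMod.castHom (dvd_refl p) F) (e i / φ) := by
      rw [ZMod.natCast_val, ZMod.castHom_apply]
    rw [h2, ← map_mul, mul_comm, div_mul_cancel₀ _ hφ]
  -- the target times the linear product
  have final : (∏ i, (X - C (L i)))
        * (C ((ZMod.castHom (dvd_refl p) F) φ)
            * derivative (∏ i, (X - C (L i)) ^ (e i / φ).val)
          - (∏ i, (X - C (L i)) ^ (e i / φ).val) * s)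
      = -((∏ i, (X - C (L i)) ^ (e i / φ).val)
          * ((∏ i, (X - C (L i))) * s - ∑ i, C ((ZMod.castHom (dvd_refl p) F) (e i))
              * ∏ j ∈ Finset.univ.erase i, (X - C (L j)))) := by
    have h1 : (∏ i, (X - C (L i)))
          * (C ((ZMod.castHom (dvd_refl p) F) φ)
              * derivative (∏ i, (X - C (L i)) ^ (e i / φ).val))
        = (∏ i, (X - C (L i)) ^ (e i / φ).val)
            * ∑ i, C ((ZMod.castHom (dvd_refl p) F) (e i))
                * ∏ j ∈ Finset.univ.erase i, (X - C (L j)) := by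
      rw [show (∏ i, (X - C (L i)))
            * (C ((ZMod.castHom (dvd_refl p) F) φ)
                * derivative (∏ i, (X - C (L i)) ^ (e i / φ).val))
          = C ((ZMod.castHom (dvd_refl p) F) φ)
            * ((∏ i, (X - C (L i)))
                * derivative (∏ i, (X - C (L i)) ^ (e i / φ).val)) by ring, key,
        Finset.mul_sum, Finset.mul_sum]
      refine Finset.sum_congr rfl fun i _ => ?_
      rw [← hcast i]
      ring
    rw [mul_sub, h1]
    ring
  have hdvd : g ∣ (∏ i, (X - C (L i)))
      * (C ((ZMod.castHom (dvd_refl p) F) φ)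
            * derivative (∏ i, (X - C (L i)) ^ (e i / φ).val)
          - (∏ i, (X - C (L i)) ^ (e i / φ).val) * s) := by
    rw [final]
    exact ((hs.mul_left _)).neg_right
  exact hcop.dvd_of_dvd_mul_left hdvd
end

section
/- If the condition deg(σ_φ) ≤ t must hold for some nonzero φ ∈ F_p for every error pattern of weight w regardless of the distribution of magnitudes, then w ≤ (2/p)t. Concretely: for any w > (2/p)t there exists an error pattern of weight w (with all magnitudes equally frequent) such that for every nonzero φ, deg(σ_φ) = wp/2 > t. -/
open Polynomial

lemma sum_div_aux (f : ℕ → ℕ) (k : ℕ) (hk : 0 < k) (d : ℕ) :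
    ∑ m ∈ Finset.range (d * k), f (m / k) = k * ∑ j ∈ Finset.range d, f j := by
  induction d with
  | zero => simp
  | succ d ih =>
    have h1 : (d + 1) * k = d * k + k := by ring
    rw [h1, Finset.sum_range_succ, Nat.mul_add, ← ih, Finset.range_eq_Ico,
      ← Finset.sum_Ico_consecutive _ (Nat.zero_le (d * k)) (Nat.le_add_right _ _)]
    congr 1
    · rw [Finset.range_eq_Ico]
    have h2 : ∀ m ∈ Finset.Ico (d * k) (d * k + k), f (m / k) = f d := by
      intro m hm
      simp only [Finset.mem_Ico] at hm
      have : m / k = d :=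
        Nat.div_eq_of_lt_le hm.1 (by rw [add_mul, one_mul]; omega)
      rw [this]
    rw [Finset.sum_congr rfl h2, Finset.sum_const, Nat.card_Ico]
    simp [mul_comm]

lemma card_filter_fin (n : ℕ) (P : ℕ → Prop) [DecidablePred P] :
    (Finset.univ.filter fun i : Fin n => P i.val).card
      = ((Finset.range n).filter P).card := by
  apply Finset.card_bij (fun i _ => i.val)
  · intro i hi
    simp only [Finset.mem_filter, Finset.mem_univ, true_and] at hi
    simp [Finset.mem_filter, Finset.mem_range, i.isLt, hi]
  · intro a ha b hb h
    exact Fin.val_injective h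
  · intro b hb
    simp only [Finset.mem_filter, Finset.mem_range] at hb
    exact ⟨⟨b, hb.1⟩, by simp [hb.2], rfl⟩

lemma sum_zmod_eq_sum_range (p : ℕ) [NeZero p] (g : ZMod p → ℕ) :
    ∑ u : ZMod p, g u = ∑ j ∈ Finset.range p, g (j : ZMod p) := by
  apply Finset.sum_bij (fun (u : ZMod p) _ => u.val)
  · intro u _
    exact Finset.mem_range.mpr (ZMod.val_lt u)
  · intro a _ b _ h
    exact ZMod.val_injective p h
  · intro j hj
    exact ⟨(j : ZMod p), Finset.mem_univ _,
      ZMod.val_cast_of_lt (Finset.mem_range.mp hj)⟩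
  · intro u _
    rw [ZMod.natCast_val, ZMod.cast_id]

/-- For any `w > (2/p)t` (i.e. `w·p > 2t`) there is an error pattern of weight `w` with all
magnitudes equally frequent such that for every nonzero `φ`, `deg(σ_φ) = w·p/2 > t`. -/
theorem stmt11 (p : ℕ) [Fact p.Prime] (hp : Odd p) (F : Type*) [Field F]
    (n w t : ℕ) (ht : 0 < t) (hdvd : (p - 1) ∣ w) (hn : w ≤ n)
    (L : Fin n → F) (hL : Function.Injective L)
    (hwt : w * p > 2 * t) :
    ∃ e : Fin n → ZMod p,
      (Finset.univ.filter fun i => e i ≠ 0).card = w ∧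
      (∀ v : ZMod p, v ≠ 0 → (Finset.univ.filter fun i => e i = v).card = w / (p - 1)) ∧
      ∀ φ : ZMod p, φ ≠ 0 →
        (∏ i, (X - C (L i)) ^ (e i / φ).val).natDegree = w * p / 2 ∧ t < w * p / 2 := by
  have hprime : p.Prime := Fact.out
  have hp2 : 2 ≤ p := hprime.two_le
  have hp3 : 3 ≤ p := by
    rcases hp with ⟨m, hm⟩
    omega
  obtain ⟨k, hk⟩ := hdvd
  have hwpos : 0 < w := by nlinarith
  have hkpos : 0 < k := by
    rcases Nat.eq_zero_or_pos k with h | h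
    · exfalso; rw [h, mul_zero] at hk; omega
    · exact h
  have hkdiv : w / (p - 1) = k := by
    rw [hk]; exact Nat.mul_div_cancel_left k (by omega)
  have hdivlt : ∀ i : Fin n, i.val < w → i.val / k + 1 < p := by
    intro i hi
    have hi' : i.val < k * (p - 1) := by rw [mul_comm, ← hk]; exact hi
    have := Nat.div_lt_of_lt_mul hi'
    omega
  refine ⟨fun i => if i.val < w then ((i.val / k + 1 : ℕ) : ZMod p) else 0, ?_, ?_, ?_⟩
  · -- weight w
    have hval : ∀ i : Fin n, i.val < w →
        ((i.val / k + 1 : ℕ) : ZMod p) ≠ 0 := by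
      intro i hi h
      have := ZMod.val_cast_of_lt (hdivlt i hi)
      rw [h, ZMod.val_zero] at this
      exact Nat.succ_ne_zero _ this.symm
    have h1 : (Finset.univ.filter fun i : Fin n =>
        (if i.val < w then ((i.val / k + 1 : ℕ) : ZMod p) else 0) ≠ 0)
        = Finset.univ.filter fun i : Fin n => i.val < w := by
      apply Finset.filter_congr
      intro i _
      by_cases hi : i.val < w
      · exact iff_of_true (by rw [if_pos hi]; exact hval i hi) hi
      · exact iff_of_false (by rw [if_neg hi]; simp) hi
    rw [h1, card_filter_fin n (fun m => m < w)]
    have h2 : (Finset.range n).filter (fun m => m < w) = Finset.range w := by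
      ext m; simp only [Finset.mem_filter, Finset.mem_range]; omega
    rw [h2, Finset.card_range]
  · -- each nonzero magnitude appears k times
    intro v hv
    rw [hkdiv]
    have hv0 : v.val ≠ 0 := fun h => hv (by rwa [← ZMod.val_eq_zero])
    have hvval : 1 ≤ v.val ∧ v.val < p := ⟨by omega, v.val_lt⟩
    have heq : ∀ i : Fin n,
        ((if i.val < w then ((i.val / k + 1 : ℕ) : ZMod p) else 0) = v)
        ↔ (i.val < w ∧ i.val / k = v.val - 1) := by
      intro i
      by_cases hi : i.val < w
      · simp only [if_pos hi]
        constructor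
        · intro h
          have hc := ZMod.val_cast_of_lt (hdivlt i hi)
          rw [h] at hc
          exact ⟨hi, by omega⟩
        · intro ⟨_, h⟩
          have h' : i.val / k + 1 = v.val := by omega
          rw [h', ZMod.natCast_val, ZMod.cast_id]
      · simp only [if_neg hi]
        constructor
        · intro h; exact absurd h.symm hv
        · intro h; exact absurd h.1 hi
    have h1 : (Finset.univ.filter fun i : Fin n =>
        (if i.val < w then ((i.val / k + 1 : ℕ) : ZMod p) else 0) = v)
        = Finset.univ.filter fun i : Fin n =>
          i.val < w ∧ i.val / k = v.val - 1 := by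
      apply Finset.filter_congr
      intro i _
      simp only [heq i]
    rw [h1, card_filter_fin n (fun m => m < w ∧ m / k = v.val - 1)]
    have hsub : (Finset.range n).filter (fun m => m < w ∧ m / k = v.val - 1)
        = Finset.Ico ((v.val - 1) * k) ((v.val - 1) * k + k) := by
      ext m
      simp only [Finset.mem_filter, Finset.mem_range, Finset.mem_Ico]
      constructor
      · intro ⟨hmn, hmw, hmk⟩
        constructor
        · calc (v.val - 1) * k = m / k * k := by rw [hmk]
            _ ≤ m := Nat.div_mul_le_self m k
        · rw [← hmk]
          exact Nat.lt_div_mul_add hkpos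
      · intro ⟨h1', h2'⟩
        have hdiv : m / k = v.val - 1 :=
          Nat.div_eq_of_lt_le h1' (by rw [add_mul, one_mul]; omega)
        have hmw : m < w := by
          have hle : (v.val - 1 + 1) * k ≤ (p - 1) * k :=
            Nat.mul_le_mul_right k (by omega)
          rw [add_mul, one_mul] at hle
          rw [hk]
          omega
        exact ⟨by omega, hmw, hdiv⟩
    rw [hsub, Nat.card_Ico]
    omega
  · -- the degree computation
    intro φ hφ
    have hhalf : t < w * p / 2 := by
      have heven : 2 ∣ w := by
        rcases hp with ⟨m, hm⟩
        rw [hk]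
        exact Dvd.dvd.mul_right ⟨m, by omega⟩ k
      obtain ⟨w2, hw2⟩ := heven
      have hwp : w * p = 2 * (w2 * p) := by rw [hw2]; ring
      omega
    refine ⟨?_, hhalf⟩
    have hne : ∀ i : Fin n, (X - C (L i)) ^
        (((if i.val < w then ((i.val / k + 1 : ℕ) : ZMod p) else 0) / φ).val) ≠ (0 : F[X]) :=
      fun i => pow_ne_zero _ (X_sub_C_ne_zero (L i))
    rw [Polynomial.natDegree_prod _ _ (fun i _ => hne i)]
    have hdeg : ∀ i : Fin n, ((X - C (L i)) ^
        (((if i.val < w then ((i.val / k + 1 : ℕ) : ZMod p) else 0) / φ).val)).natDegree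
        = ((if i.val < w then ((i.val / k + 1 : ℕ) : ZMod p) else 0) / φ).val := by
      intro i
      rw [Polynomial.natDegree_pow, Polynomial.natDegree_X_sub_C, mul_one]
    rw [Finset.sum_congr rfl (fun i _ => hdeg i)]
    have hsum1 : ∑ i : Fin n,
        ((if i.val < w then ((i.val / k + 1 : ℕ) : ZMod p) else 0) / φ).val
        = ∑ m ∈ Finset.range w, ((((m / k + 1 : ℕ) : ZMod p)) / φ).val := by
      rw [Fin.sum_univ_eq_sum_range
        (fun m => ((if m < w then ((m / k + 1 : ℕ) : ZMod p) else 0) / φ).val) n]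
      rw [← Finset.sum_subset (Finset.range_subset_range.mpr hn)]
      · apply Finset.sum_congr rfl
        intro m hm
        rw [Finset.mem_range] at hm
        rw [if_pos hm]
      · intro m _ hm
        rw [Finset.mem_range] at hm
        push_neg at hm
        rw [if_neg (by omega), zero_div, ZMod.val_zero]
    rw [hsum1, hk,
      sum_div_aux (fun j => ((((j + 1 : ℕ) : ZMod p)) / φ).val) k hkpos (p - 1)]
    have hsum2 : ∑ j ∈ Finset.range (p - 1), ((((j + 1 : ℕ) : ZMod p)) / φ).val
        = ∑ u : ZMod p, (u / φ).val := by
      rw [sum_zmod_eq_sum_range p (fun u => (u / φ).val)]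
      have h := Finset.sum_range_succ' (fun j => (((j : ℕ) : ZMod p) / φ).val) (p - 1)
      rw [show p - 1 + 1 = p from by omega] at h
      rw [h]
      simp
    have hsum3 : ∑ u : ZMod p, (u / φ).val = ∑ u : ZMod p, u.val := by
      simp only [div_eq_mul_inv]
      have h := Equiv.sum_comp (Equiv.mulRight₀ φ⁻¹ (inv_ne_zero hφ))
        (fun u : ZMod p => u.val)
      simpa using h
    have hsum4 : ∑ u : ZMod p, u.val = ∑ j ∈ Finset.range p, j := by
      rw [sum_zmod_eq_sum_range p (fun u => u.val)]
      exact Finset.sum_congr rfl fun j hj =>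
        ZMod.val_cast_of_lt (Finset.mem_range.mp hj)
    rw [hsum2, hsum3, hsum4]
    have h2S : (∑ j ∈ Finset.range p, j) * 2 = p * (p - 1) :=
      Finset.sum_range_id_mul_two p
    have h3 : (p - 1) * k * p = (k * ∑ j ∈ Finset.range p, j) * 2 := by
      calc (p - 1) * k * p = k * ((∑ j ∈ Finset.range p, j) * 2) := by rw [h2S]; ring
        _ = (k * ∑ j ∈ Finset.range p, j) * 2 := by ring
    rw [h3, Nat.mul_div_cancel _ (by norm_num : 0 < 2)]
end

section
/- Let σ_φ(x) = Π_i (1 − x L_i)^{lift(e_i ξ_i / φ)} where L_i ∈ F_q are nonzero and distinct, ξ_i ∈ F_p \ {0}, and e ∈ F_p^n. Then over F_q[x]/x^r, −φ·σ_φ'(x) ≡ σ_φ(x)·s_e(x) (mod x^r), where s_e(x) = Σ_j e_j D_j/(1 − x L_j) mod x^r with D_j = ξ_j L_j. -/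
open Polynomial

private lemma deriv_fin_prod {R : Type*} [CommSemiring R] {ι : Type*} [DecidableEq ι]
    (s : Finset ι) (f : ι → R[X]) :
    derivative (∏ i ∈ s, f i) = ∑ i ∈ s, (∏ k ∈ s.erase i, f k) * derivative (f i) := by
  induction s using Finset.induction with
  | empty => simp
  | @insert a s ha ih =>
    rw [Finset.prod_insert ha, derivative_mul, ih, Finset.sum_insert ha,
      Finset.erase_insert ha, Finset.mul_sum]
    congr 1
    · exact mul_comm _ _
    · refine Finset.sum_congr rfl fun i hi => ?_
      rw [Finset.erase_insert_of_ne (fun h => ha (by rw [h]; exact hi)),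
        Finset.prod_insert (fun h => ha (Finset.erase_subset _ _ h))]
      ring

/-- Key equation for the alternant family: with
`σ_φ(x) = ∏ᵢ(1 - x·Lᵢ)^{lift(eᵢξᵢ/φ)}` and `s_e(x) ≡ ∑ⱼ eⱼDⱼ/(1 - x·Lⱼ) (mod x^r)` where
`Dⱼ = ξⱼ·Lⱼ` (the congruence given in cleared-denominator form), one has
`-φ·σ_φ' ≡ σ_φ·s_e (mod x^r)`. -/
theorem stmt16 (p : ℕ) [Fact p.Prime] (F : Type*) [Field F] [Fintype F] [CharP F p]
    (n r : ℕ) (hr : 1 ≤ r)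
    (L : Fin n → F) (hL : Function.Injective L) (hL0 : ∀ i, L i ≠ 0)
    (ξ : Fin n → ZMod p) (hξ : ∀ i, ξ i ≠ 0)
    (e : Fin n → ZMod p) (φ : ZMod p) (hφ : φ ≠ 0)
    (s : F[X])
    (hs : (X ^ r : F[X]) ∣ (∏ j, (1 - X * C (L j))) * s
        - ∑ j, C ((ZMod.castHom (dvd_refl p) F) (e j)
              * (ZMod.castHom (dvd_refl p) F) (ξ j) * L j)
            * ∏ k ∈ Finset.univ.erase j, (1 - X * C (L k))) :
    (X ^ r : F[X]) ∣
        C ((ZMod.castHom (dvd_refl p) F) φ)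
          * derivative (∏ i, (1 - X * C (L i)) ^ (e i * ξ i / φ).val)
        + (∏ i, (1 - X * C (L i)) ^ (e i * ξ i / φ).val) * s := by
  set σ : F[X] := ∏ i, (1 - X * C (L i)) ^ (e i * ξ i / φ).val with hσ
  set P : F[X] := ∏ j, (1 - X * C (L j)) with hP
  set S0 : F[X] := ∑ j, C ((ZMod.castHom (dvd_refl p) F) (e j)
              * (ZMod.castHom (dvd_refl p) F) (ξ j) * L j)
            * ∏ k ∈ Finset.univ.erase j, (1 - X * C (L k)) with hS0
  have hkey : C ((ZMod.castHom (dvd_refl p) F) φ) * derivative σ * P = - (σ * S0) := by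
    rw [hσ, deriv_fin_prod, hS0, Finset.mul_sum, Finset.sum_mul, Finset.mul_sum,
      ← Finset.sum_neg_distrib]
    refine Finset.sum_congr rfl fun i _ => ?_
    have hder : derivative (1 - X * C (L i)) = -C (L i) := by
      simp
    rw [derivative_pow, hder]
    have hσi : σ = (1 - X * C (L i)) ^ (e i * ξ i / φ).val
        * ∏ k ∈ Finset.univ.erase i, (1 - X * C (L k)) ^ (e k * ξ k / φ).val :=
      (Finset.mul_prod_erase _ _ (Finset.mem_univ i)).symm
    have hPi : P = (1 - X * C (L i)) * ∏ k ∈ Finset.univ.erase i, (1 - X * C (L k)) :=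
      (Finset.mul_prod_erase _ _ (Finset.mem_univ i)).symm
    by_cases hc : e i * ξ i / φ = 0
    · have h0 : e i * ξ i = 0 := by
        have := div_mul_cancel₀ (e i * ξ i) hφ
        rw [hc, zero_mul] at this; exact this.symm
      have h0' : (ZMod.castHom (dvd_refl p) F) (e i) * (ZMod.castHom (dvd_refl p) F) (ξ i) = 0 := by
        rw [← map_mul, h0, map_zero]
      have hv : (e i * ξ i / φ).val = 0 := by rw [hc, ZMod.val_zero]
      simp only [hv, pow_zero, Nat.cast_zero, map_zero, zero_mul, mul_zero, h0',
        neg_zero, one_mul]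
    · have hC : C ((ZMod.castHom (dvd_refl p) F) φ) * C (((e i * ξ i / φ).val : F))
          = C ((ZMod.castHom (dvd_refl p) F) (e i)) * C ((ZMod.castHom (dvd_refl p) F) (ξ i)) := by
        rw [← map_mul, ← map_mul]
        congr 1
        rw [ZMod.natCast_val, ← ZMod.castHom_apply (h := dvd_refl p), ← map_mul, ← map_mul]
        congr 1
        field_simp
      obtain ⟨k, hk⟩ : ∃ k, (e i * ξ i / φ).val = k + 1 := by
        have : (e i * ξ i / φ).val ≠ 0 := fun h => hc ((ZMod.val_eq_zero _).mp h)
        exact ⟨(e i * ξ i / φ).val - 1, by omega⟩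
      rw [hPi, ← Finset.mul_prod_erase Finset.univ
        (fun j => (1 - X * C (L j)) ^ (e j * ξ j / φ).val) (Finset.mem_univ i), hk]
      simp only [map_mul, Nat.add_sub_cancel]
      rw [hk] at hC
      linear_combination (-(C (L i)) * (1 - X * C (L i)) ^ (k + 1)
        * (∏ k ∈ Finset.univ.erase i, (1 - X * C (L k)) ^ (e k * ξ k / φ).val)
        * (∏ k ∈ Finset.univ.erase i, (1 - X * C (L k)))) * hC
  have hTP : (C ((ZMod.castHom (dvd_refl p) F) φ) * derivative σ + σ * s) * P
      = σ * (P * s - S0) := by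
    rw [add_mul, hkey]; ring
  have hdvdTP : (X ^ r : F[X]) ∣
      (C ((ZMod.castHom (dvd_refl p) F) φ) * derivative σ + σ * s) * P := by
    rw [hTP]
    exact Dvd.dvd.mul_left hs σ
  have hcop : IsCoprime ((X : F[X]) ^ r) P := by
    apply IsCoprime.pow_left
    rw [Polynomial.prime_X.coprime_iff_not_dvd, Polynomial.X_dvd_iff,
      Polynomial.coeff_zero_eq_eval_zero]
    simp [hP, eval_prod]
  exact hcop.dvd_of_dvd_mul_right hdvdTP
end
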